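/- Let P = ((V,E),(V₁,V_R)) be an MDP skeleton. (Distinct maximal end-components of P are disjoint, so the following quotient is well defined.) Let P' be the MDP skeleton obtained from P by contracting every MEC: each MEC X of P is replaced by a single player-1 vertex u_X; every edge of E between a vertex of X and a vertex outside of X becomes an edge between u_X and the image of that vertex; every edge of E inside X becomes a self-loop at u_X; all vertices belonging to no MEC keep their ownership (player-1 or random) and the edges among them are kept. Then P' contains no non-trivial end-component: every end-component of P' consists of a single vertex with a self-loop. -/

import Mathlib

/-- The subgraph induced on `X` is strongly connected. -/
def SCOn {V : Type*} (E : V → V → Prop) (X : Set V) : Prop :=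
  ∀ u ∈ X, ∀ v ∈ X, Relation.ReflTransGen (fun a b => a ∈ X ∧ b ∈ X ∧ E a b) u v

/-- `X` is an end-component of the MDP skeleton with edges `E`, random vertices `VR`
(and player-1 vertices `VRᶜ`). -/
def IsEC {V : Type*} (E : V → V → Prop) (VR X : Set V) : Prop :=
  SCOn E X ∧ (∃ a ∈ X, ∃ b ∈ X, E a b) ∧ ∀ v ∈ X ∩ VR, ∀ w, E v w → w ∈ X

/-- `X` is a maximal end-component (MEC). -/
def IsMEC {V : Type*} (E : V → V → Prop) (VR X : Set V) : Prop :=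
  IsEC E VR X ∧ ∀ Y, IsEC E VR Y → X ⊆ Y → Y = X

lemma rtg_mono {V : Type*} {E : V → V → Prop} {X Y : Set V} (h : X ⊆ Y) {u v : V}
    (hp : Relation.ReflTransGen (fun a b => a ∈ X ∧ b ∈ X ∧ E a b) u v) :
    Relation.ReflTransGen (fun a b => a ∈ Y ∧ b ∈ Y ∧ E a b) u v := by
  induction hp with
  | refl => exact Relation.ReflTransGen.refl
  | tail _ hab ih => exact ih.tail ⟨h hab.1, h hab.2.1, hab.2.2⟩

lemma union_ec {V : Type*} (E : V → V → Prop) (VR : Set V) {X Y : Set V}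
    (hX : IsEC E VR X) (hY : IsEC E VR Y) {w : V} (hwX : w ∈ X) (hwY : w ∈ Y) :
    IsEC E VR (X ∪ Y) := by
  obtain ⟨hXs, hXe, hXc⟩ := hX
  obtain ⟨hYs, hYe, hYc⟩ := hY
  refine ⟨?_, ?_, ?_⟩
  · intro u hu v hv
    have puw : Relation.ReflTransGen (fun a b => a ∈ X ∪ Y ∧ b ∈ X ∪ Y ∧ E a b) u w := by
      rcases hu with hu | hu
      · exact rtg_mono Set.subset_union_left (hXs u hu w hwX)
      · exact rtg_mono Set.subset_union_right (hYs u hu w hwY)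
    have pwv : Relation.ReflTransGen (fun a b => a ∈ X ∪ Y ∧ b ∈ X ∪ Y ∧ E a b) w v := by
      rcases hv with hv | hv
      · exact rtg_mono Set.subset_union_left (hXs w hwX v hv)
      · exact rtg_mono Set.subset_union_right (hYs w hwY v hv)
    exact puw.trans pwv
  · obtain ⟨a, ha, b, hb, he⟩ := hXe
    exact ⟨a, Or.inl ha, b, Or.inl hb, he⟩
  · rintro v ⟨hv, hvR⟩ z hvz
    rcases hv with hv | hv
    · exact Or.inl (hXc v ⟨hv, hvR⟩ z hvz)
    · exact Or.inr (hYc v ⟨hv, hvR⟩ z hvz)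

lemma exists_mec {V : Type*} [Fintype V] (E : V → V → Prop) (VR : Set V)
    (S : Set V) (hS : IsEC E VR S) : ∃ X, IsMEC E VR X ∧ S ⊆ X := by
  have key : ∀ n : ℕ, ∀ S : Set V, IsEC E VR S →
      Fintype.card V - S.ncard ≤ n → ∃ X, IsMEC E VR X ∧ S ⊆ X := by
    intro n
    induction n using Nat.strong_induction_on with
    | _ n ih =>
      intro S hS hle
      by_cases h : ∀ Y, IsEC E VR Y → S ⊆ Y → Y = S
      · exact ⟨S, ⟨hS, h⟩, subset_rfl⟩
      · push_neg at h
        obtain ⟨Y, hY, hSY, hne⟩ := h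
        have hss : S ⊂ Y := ssubset_of_subset_of_ne hSY hne.symm
        have hcard : S.ncard < Y.ncard := Set.ncard_lt_ncard hss (Set.toFinite Y)
        have hYle : Y.ncard ≤ Fintype.card V := by
          have := Set.ncard_le_ncard (Set.subset_univ Y) Set.finite_univ
          simpa [Set.ncard_univ, Nat.card_eq_fintype_card] using this
        have hlt : Fintype.card V - Y.ncard < Fintype.card V - S.ncard :=
          Nat.sub_lt_sub_left (lt_of_lt_of_le hcard hYle) hcard
        obtain ⟨X, hX, hYX⟩ := ih _ (lt_of_lt_of_le hlt hle) Y hY le_rfl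
        exact ⟨X, hX, hSY.trans hYX⟩
  exact key _ S hS le_rfl

/-- Contracting every MEC of the MDP skeleton `(E, VR)` yields an MDP skeleton with no
non-trivial end-component.  The contraction is described by a surjection `π : V → V'`
identifying exactly the vertices lying in a common MEC; the contracted edge relation `E'`
is the image of `E` under `π`; the random vertices `VR'` of the contraction are the
images of the random vertices lying in no MEC (contracted MECs become player-1 vertices).
Distinct MECs are disjoint (first conjunct), so such a quotient is well defined. -/
theorem stmt7 {V V' : Type*} [Fintype V] [Fintype V'] (E : V → V → Prop) (VR : Set V)
    (π : V → V') (hsurj : Function.Surjective π)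
    (hπ : ∀ x y : V, π x = π y ↔ (x = y ∨ ∃ X : Set V, IsMEC E VR X ∧ x ∈ X ∧ y ∈ X))
    (E' : V' → V' → Prop)
    (hE' : ∀ a b : V', E' a b ↔ ∃ x y : V, π x = a ∧ π y = b ∧ E x y)
    (VR' : Set V')
    (hVR' : ∀ a : V', a ∈ VR' ↔
      ∃ x : V, π x = a ∧ x ∈ VR ∧ ∀ X : Set V, IsMEC E VR X → x ∉ X) :
    (∀ X Y : Set V, IsMEC E VR X → IsMEC E VR Y → X ≠ Y → X ∩ Y = ∅) ∧
    (∀ Y : Set V', IsEC E' VR' Y → ∃ a : V', Y = {a} ∧ E' a a) := by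
  have disj : ∀ X Y : Set V, IsMEC E VR X → IsMEC E VR Y → X ≠ Y → X ∩ Y = ∅ := by
    intro X Y hX hY hne
    by_contra h
    obtain ⟨w, hwX, hwY⟩ := Set.nonempty_iff_ne_empty.mpr h
    have hZ := union_ec E VR hX.1 hY.1 hwX hwY
    have h1 := hX.2 _ hZ Set.subset_union_left
    have h2 := hY.2 _ hZ Set.subset_union_right
    exact hne (h1.symm.trans h2)
  refine ⟨disj, ?_⟩
  intro Yec hYec
  set S : Set V := π ⁻¹' Yec with hSdef
  have fib : ∀ p q : V, π p = π q → π p ∈ Yec →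
      Relation.ReflTransGen (fun a b => a ∈ S ∧ b ∈ S ∧ E a b) p q := by
    intro p q hpq hmem
    rcases (hπ p q).mp hpq with rfl | ⟨X, hX, hpX, hqX⟩
    · exact Relation.ReflTransGen.refl
    · have hXS : X ⊆ S := by
        intro z hz
        have hz' : π z = π p := (hπ z p).mpr (Or.inr ⟨X, hX, hz, hpX⟩)
        show π z ∈ Yec
        rw [hz']; exact hmem
      exact rtg_mono hXS (hX.1.1 p hpX q hqX)
  have lift : ∀ a b : V', Relation.ReflTransGen (fun a b => a ∈ Yec ∧ b ∈ Yec ∧ E' a b) a b →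
      ∀ u v : V, π u = a → π v = b → a ∈ Yec →
      Relation.ReflTransGen (fun a b => a ∈ S ∧ b ∈ S ∧ E a b) u v := by
    intro a b hp
    induction hp using Relation.ReflTransGen.head_induction_on with
    | refl =>
      intro u v hu hv ha
      exact fib u v (by rw [hu, hv]) (hu ▸ ha)
    | head hstep _ ihp =>
      rename_i a c _
      intro u v hu hv ha
      obtain ⟨haY, hcY, he⟩ := hstep
      obtain ⟨x, y, hx, hy, hxy⟩ := (hE' _ _).mp he
      have hxS : x ∈ S := by show π x ∈ Yec; rw [hx]; exact haY
      have hyS : y ∈ S := by show π y ∈ Yec; rw [hy]; exact hcY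
      have p1 := fib u x (by rw [hu, hx]) (hu ▸ ha)
      have p2 := ihp y v hy hv hcY
      exact p1.trans (Relation.ReflTransGen.head ⟨hxS, hyS, hxy⟩ p2)
  obtain ⟨a0, ha0Y, b0, hb0Y, he0⟩ := hYec.2.1
  obtain ⟨x0, y0, hx0, hy0, hxy0⟩ := (hE' a0 b0).mp he0
  have hx0S : x0 ∈ S := by show π x0 ∈ Yec; rw [hx0]; exact ha0Y
  have hy0S : y0 ∈ S := by show π y0 ∈ Yec; rw [hy0]; exact hb0Y
  have hSec : IsEC E VR S := by
    refine ⟨?_, ⟨x0, hx0S, y0, hy0S, hxy0⟩, ?_⟩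
    · intro u hu v hv
      exact lift (π u) (π v) (hYec.1 (π u) hu (π v) hv) u v rfl rfl hu
    · rintro v ⟨hvS, hvR⟩ w hvw
      by_cases hmec : ∃ X : Set V, IsMEC E VR X ∧ v ∈ X
      · obtain ⟨X, hX, hvX⟩ := hmec
        have hwX : w ∈ X := hX.1.2.2 v ⟨hvX, hvR⟩ w hvw
        have hw' : π w = π v := (hπ w v).mpr (Or.inr ⟨X, hX, hwX, hvX⟩)
        show π w ∈ Yec
        rw [hw']; exact hvS
      · push_neg at hmec
        have hv' : π v ∈ VR' := (hVR' _).mpr ⟨v, rfl, hvR, fun X hX => hmec X hX⟩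
        have he' : E' (π v) (π w) := (hE' _ _).mpr ⟨v, w, rfl, rfl, hvw⟩
        exact hYec.2.2 (π v) ⟨hvS, hv'⟩ (π w) he'
  obtain ⟨X0, hX0, hSX0⟩ := exists_mec E VR S hSec
  have hsingle : Yec = {π x0} := by
    ext a
    constructor
    · intro haY
      obtain ⟨z, rfl⟩ := hsurj a
      have hzS : z ∈ S := haY
      have hz : π z = π x0 := (hπ z x0).mpr (Or.inr ⟨X0, hX0, hSX0 hzS, hSX0 hx0S⟩)
      exact hz
    · rintro rfl
      exact hx0S
  refine ⟨π x0, hsingle, ?_⟩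
  have ha0 : a0 = π x0 := by rw [hsingle] at ha0Y; exact ha0Y
  have hb0 : b0 = π x0 := by rw [hsingle] at hb0Y; exact hb0Y
  rw [ha0, hb0] at he0; exact he0
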